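/- Let X and Y be real random variables defined on a common probability space, with Y square integrable (E[Y²] < ∞); no independence of X and Y is assumed. Then the distribution of X satisfies condition (TO) if and only if the distribution of X + Y satisfies condition (TO). -/

import Mathlib

open MeasureTheory Set
open scoped ENNReal

/-- The denominator in condition (TO): `1 + ∫_0^x ∫_y^∞ μ((−∞,−z]) dz dy`. -/
noncomputable def TOden (μ : Measure ℝ) (x : ℝ) : ENNReal :=
  1 + ∫⁻ y in Ioc (0 : ℝ) x, ∫⁻ z in Ioi y, μ (Iic (-z))

/-- A Borel measure `μ` on `ℝ` satisfies condition (TO) at level `κ > 0` if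
`∫_κ^∞ x·μ([x,∞)) / (1 + ∫_0^x ∫_y^∞ μ((−∞,−z]) dz dy) dx < ∞`; the `ENNReal`
division is `0` whenever the denominator is infinite. -/
def TOat (μ : Measure ℝ) (κ : ℝ) : Prop :=
  (∫⁻ x in Ioi κ, (ENNReal.ofReal x * μ (Ici x)) / TOden μ x) < ⊤

/-- `μ` satisfies condition (TO) if it satisfies (TO) at some level `κ > 0`. -/
def TO (μ : Measure ℝ) : Prop := ∃ κ > (0 : ℝ), TOat μ κ

set_option linter.unusedSectionVars false

noncomputable def HH (t v : ℝ) : ℝ := v * min v t - (min v t)^2/2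

section aux
variable {Ω : Type*} [MeasurableSpace Ω] (P : Measure Ω) [IsProbabilityMeasure P]

lemma HH_nonneg {t v : ℝ} (ht : 0 ≤ t) (hv : 0 ≤ v) : 0 ≤ HH t v := by
  rcases le_total v t with h | h
  · rw [HH, min_eq_left h]; nlinarith
  · rw [HH, min_eq_right h]; nlinarith

lemma HH_mono {t v w : ℝ} (ht : 0 ≤ t) (hv : 0 ≤ v) (hvw : v ≤ w) : HH t v ≤ HH t w := by
  rcases le_total w t with h2 | h2
  · rw [HH, HH, min_eq_left (hvw.trans h2), min_eq_left h2]; nlinarith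
  · rcases le_total v t with h1 | h1
    · rw [HH, HH, min_eq_left h1, min_eq_right h2]; nlinarith
    · rw [HH, HH, min_eq_right h1, min_eq_right h2]; nlinarith

lemma HH_key {t a b : ℝ} (ht : 0 ≤ t) (ha : 0 ≤ a) (hb : 0 ≤ b) :
    HH t a ≤ 6 * HH t (max (a - b) 0) + 9 * b^2 := by
  set c := max (a - b) 0 with hc
  have hc0 : 0 ≤ c := le_max_right _ _
  have hca : c ≤ a := by rw [hc]; rcases le_total (a-b) 0 with h|h
    <;> simp [max_eq_left, max_eq_right, h] <;> linarith
  have hac : a ≤ c + b := by have := le_max_left (a - b) 0; linarith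
  rcases le_total a t with h1 | h1
  · rw [HH, HH, min_eq_left h1, min_eq_left (hca.trans h1)]; nlinarith [sq_nonneg (5*a - 6*b)]
  · rcases le_total c t with h2 | h2
    · rw [HH, HH, min_eq_right h1, min_eq_left h2]; nlinarith [sq_nonneg (c + b - t), sq_nonneg (c - b), mul_nonneg (show (0:ℝ) ≤ c + b - a by linarith) ht]
    · rw [HH, HH, min_eq_right h1, min_eq_right h2]
      nlinarith [sq_nonneg (5*t - 6*b), mul_nonneg (sub_nonneg.2 h1) ht]


lemma cont_max (v : ℝ) : Continuous (fun y : ℝ => max (v - y) 0) :=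
  (continuous_const.sub continuous_id).max continuous_const

lemma lintegral_HH {t v : ℝ} (ht : 0 ≤ t) (hv : 0 ≤ v) :
    ∫⁻ y in Ioc (0:ℝ) t, ENNReal.ofReal (v - y) = ENNReal.ofReal (HH t v) := by
  have hcong : ∀ y : ℝ, ENNReal.ofReal (v - y) = ENNReal.ofReal (max (v - y) 0) := by
    intro y; rcases le_total (v - y) 0 with h | h
    · rw [ENNReal.ofReal_of_nonpos h, max_eq_right h]; simp
    · rw [max_eq_left h]
  simp_rw [hcong]
  rw [← ofReal_integral_eq_lintegral_ofReal ((cont_max v).integrableOn_Ioc)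
      (Filter.Eventually.of_forall fun y => le_max_right _ _)]
  congr 1
  rw [← intervalIntegral.integral_of_le ht]
  have hii : ∀ a b : ℝ, IntervalIntegrable (fun y : ℝ => max (v - y) 0) volume a b :=
    fun a b => (cont_max v).intervalIntegrable a b
  rcases le_total t v with h | h
  · rw [intervalIntegral.integral_congr (g := fun y => v - y)
      (fun y hy => by
        rw [uIcc_of_le ht] at hy
        exact max_eq_left (by linarith [hy.2]))]
    rw [intervalIntegral.integral_sub intervalIntegrable_const (intervalIntegral.intervalIntegrable_id),
      intervalIntegral.integral_const, integral_id]
    rw [HH, min_eq_right h]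
    simp; ring
  · rw [← intervalIntegral.integral_add_adjacent_intervals (hii 0 v) (hii v t)]
    rw [intervalIntegral.integral_congr (g := fun y => v - y)
      (fun y hy => by
        rw [uIcc_of_le hv] at hy
        exact max_eq_left (by linarith [hy.2]))]
    rw [intervalIntegral.integral_congr (a := v) (b := t) (g := fun _ => 0)
      (fun y hy => by
        rw [uIcc_of_le h] at hy
        exact max_eq_right (by linarith [hy.1]))]
    rw [intervalIntegral.integral_sub intervalIntegrable_const (intervalIntegral.intervalIntegrable_id),
      intervalIntegral.integral_const, integral_id, intervalIntegral.integral_zero]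
    rw [HH, min_eq_left h]
    simp


lemma inner_rep (V : Ω → ℝ) (hV : Measurable V) (y : ℝ) :
    ∫⁻ z in Ioi y, P {ω | z ≤ V ω} = ∫⁻ ω, ENNReal.ofReal (V ω - y) ∂P := by
  have hset : MeasurableSet {p : ℝ × Ω | p.1 ≤ V p.2} :=
    measurableSet_le measurable_fst (hV.comp measurable_snd)
  have hmes : ∀ z : ℝ, MeasurableSet {ω | z ≤ V ω} := fun z => hV measurableSet_Ici
  calc ∫⁻ z in Ioi y, P {ω | z ≤ V ω}
      = ∫⁻ z in Ioi y, ∫⁻ ω, {p : ℝ × Ω | p.1 ≤ V p.2}.indicator 1 (z, ω) ∂P := by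
        refine lintegral_congr fun z => ?_
        rw [← lintegral_indicator_one (hmes z)]
        refine lintegral_congr fun ω => ?_
        simp [Set.indicator_apply]
    _ = ∫⁻ ω, (∫⁻ z in Ioi y, {p : ℝ × Ω | p.1 ≤ V p.2}.indicator 1 (z, ω)) ∂P := by
        refine lintegral_lintegral_swap ?_
        exact ((measurable_one.indicator hset).comp
          (measurable_fst.prodMk measurable_snd)).aemeasurable
    _ = ∫⁻ ω, ENNReal.ofReal (V ω - y) ∂P := by
        refine lintegral_congr fun ω => ?_
        have h1 : ∀ z : ℝ, ({p : ℝ × Ω | p.1 ≤ V p.2}.indicator 1 (z, ω) : ℝ≥0∞)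
            = (Iic (V ω)).indicator 1 z := by
          intro z; simp [Set.indicator_apply]
        simp_rw [h1]
        rw [lintegral_indicator_one measurableSet_Iic, Measure.restrict_apply measurableSet_Iic,
          Iic_inter_Ioi, Real.volume_Ioc]

lemma TO_rep (V : Ω → ℝ) (hV : Measurable V) (hV0 : ∀ ω, 0 ≤ V ω) {t : ℝ} (ht : 0 ≤ t) :
    ∫⁻ y in Ioc (0:ℝ) t, ∫⁻ z in Ioi y, P {ω | z ≤ V ω}
      = ∫⁻ ω, ENNReal.ofReal (HH t (V ω)) ∂P := by
  calc ∫⁻ y in Ioc (0:ℝ) t, ∫⁻ z in Ioi y, P {ω | z ≤ V ω}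
      = ∫⁻ y in Ioc (0:ℝ) t, ∫⁻ ω, ENNReal.ofReal (V ω - y) ∂P :=
        lintegral_congr fun y => inner_rep P V hV y
    _ = ∫⁻ ω, (∫⁻ y in Ioc (0:ℝ) t, ENNReal.ofReal (V ω - y)) ∂P := by
        refine lintegral_lintegral_swap ?_
        apply Measurable.aemeasurable
        exact ENNReal.measurable_ofReal.comp ((hV.comp measurable_snd).sub measurable_fst)
    _ = ∫⁻ ω, ENNReal.ofReal (HH t (V ω)) ∂P :=
        lintegral_congr fun ω => lintegral_HH ht (hV0 ω)


lemma HH_cont (t : ℝ) : Continuous fun v : ℝ => HH t v := by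
  unfold HH; fun_prop

lemma TOden_rep (W : Ω → ℝ) (hW : Measurable W) {t : ℝ} (ht : 0 ≤ t) :
    TOden (P.map W) t = 1 + ∫⁻ ω, ENNReal.ofReal (HH t (max (-W ω) 0)) ∂P := by
  rw [TOden]
  congr 1
  rw [← TO_rep P (fun ω => max (-W ω) 0) (hW.neg.max measurable_const) (fun ω => le_max_right _ _) ht]
  refine setLIntegral_congr_fun measurableSet_Ioc
    (fun y hy => ?_)
  refine setLIntegral_congr_fun measurableSet_Ioi
    (fun z hz => ?_)
  have hz0 : 0 < z := hy.1.trans hz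
  rw [Measure.map_apply hW measurableSet_Iic]
  congr 1
  ext ω
  simp only [mem_preimage, mem_Iic, mem_setOf_eq, le_max_iff]
  constructor
  · intro h; left; linarith
  · rintro (h | h) <;> linarith

lemma den_le (X Y : Ω → ℝ) (hX : Measurable X) (hY : Measurable Y) {t : ℝ} (ht : 0 ≤ t) :
    TOden (P.map X) t ≤ (7 + 9 * ∫⁻ ω, ENNReal.ofReal ((Y ω)^2) ∂P)
      * TOden (P.map fun ω => X ω + Y ω) t := by
  set C := ∫⁻ ω, ENNReal.ofReal ((Y ω)^2) ∂P with hCdef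
  rw [TOden_rep P X hX ht, TOden_rep P (fun ω => X ω + Y ω) (hX.add hY) ht]
  set B := ∫⁻ ω, ENNReal.ofReal (HH t (max (-(X ω + Y ω)) 0)) ∂P with hBdef
  have hAB : (∫⁻ ω, ENNReal.ofReal (HH t (max (-X ω) 0)) ∂P) ≤ 6 * B + 9 * C := by
    have hpt : ∀ ω, ENNReal.ofReal (HH t (max (-X ω) 0))
        ≤ ENNReal.ofReal (6 * HH t (max (-(X ω + Y ω)) 0)) + ENNReal.ofReal (9 * (Y ω)^2) := by
      intro ω
      rw [← ENNReal.ofReal_add (mul_nonneg (by norm_num) (HH_nonneg ht (le_max_right (-(X ω + Y ω)) 0))) (by positivity)]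
      apply ENNReal.ofReal_le_ofReal
      have h1 : HH t (max (-X ω) 0) ≤ 6 * HH t (max (max (-X ω) 0 - |Y ω|) 0) + 9 * (Y ω)^2 := by
        have := HH_key (a := max (-X ω) 0) (b := |Y ω|) ht (le_max_right _ _) (abs_nonneg _)
        rwa [sq_abs] at this
      refine h1.trans ?_
      have h2 : max (max (-X ω) 0 - |Y ω|) 0 ≤ max (-(X ω + Y ω)) 0 := by
        rcases le_total (max (-X ω) 0 - |Y ω|) 0 with h | h
        · rw [max_eq_right h]; exact le_max_right _ _
        · rw [max_eq_left h]
          rcases le_total (-X ω) 0 with h3 | h3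
          · rw [max_eq_right h3]; refine le_trans (by linarith [abs_nonneg (Y ω)]) (le_max_right _ _)
          · rw [max_eq_left h3]
            refine le_trans ?_ (le_max_left _ _)
            cases abs_cases (Y ω) <;> linarith
      have := HH_mono ht (le_max_right (max (-X ω) 0 - |Y ω|) 0) h2
      linarith
    calc (∫⁻ ω, ENNReal.ofReal (HH t (max (-X ω) 0)) ∂P)
        ≤ ∫⁻ ω, (ENNReal.ofReal (6 * HH t (max (-(X ω + Y ω)) 0)) + ENNReal.ofReal (9 * (Y ω)^2)) ∂P :=
          lintegral_mono hpt
      _ = (∫⁻ ω, ENNReal.ofReal (6 * HH t (max (-(X ω + Y ω)) 0)) ∂P)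
            + ∫⁻ ω, ENNReal.ofReal (9 * (Y ω)^2) ∂P := by
          have hmH : Measurable fun ω => ENNReal.ofReal (HH t (max (-(X ω + Y ω)) 0)) :=
            ((HH_cont t).measurable.comp ((hX.add hY).neg.max measurable_const)).ennreal_ofReal
          have hm6 : Measurable fun ω => ENNReal.ofReal (6 * HH t (max (-(X ω + Y ω)) 0)) :=
            ((measurable_const.mul ((HH_cont t).measurable.comp
              ((hX.add hY).neg.max measurable_const)))).ennreal_ofReal
          exact lintegral_add_left hm6 _
      _ = 6 * B + 9 * C := by
          rw [hBdef, hCdef]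
          congr 1
          · have hmH : Measurable fun ω => ENNReal.ofReal (HH t (max (-(X ω + Y ω)) 0)) :=
              ((HH_cont t).measurable.comp ((hX.add hY).neg.max measurable_const)).ennreal_ofReal
            simp_rw [ENNReal.ofReal_mul (by norm_num : (0:ℝ) ≤ 6)]
            rw [lintegral_const_mul _ hmH]
            norm_num
          · have hmY : Measurable fun ω => ENNReal.ofReal ((Y ω)^2) :=
              (hY.pow_const 2).ennreal_ofReal
            simp_rw [ENNReal.ofReal_mul (by norm_num : (0:ℝ) ≤ 9)]
            rw [lintegral_const_mul _ hmY]
            norm_num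
  calc 1 + (∫⁻ ω, ENNReal.ofReal (HH t (max (-X ω) 0)) ∂P)
      ≤ 1 + (6 * B + 9 * C) := add_le_add_right hAB 1
    _ ≤ (7 + 9 * C) * (1 + B) := by
        have e : (7 + 9 * C) * (1 + B) = (1 + (6 * B + 9 * C)) + (6 + B + 9 * C * B) := by ring
        rw [e]; exact le_self_add


lemma TOden_mono (μ : Measure ℝ) {s t : ℝ} (hst : s ≤ t) : TOden μ s ≤ TOden μ t :=
  add_le_add_right (lintegral_mono_set (Ioc_subset_Ioc_right hst)) 1

lemma one_le_TOden (μ : Measure ℝ) (x : ℝ) : 1 ≤ TOden μ x := le_self_add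

lemma tail_le (X Y : Ω → ℝ) (hX : Measurable X) (hY : Measurable Y) (x : ℝ) :
    (P.map fun ω => X ω + Y ω) (Ici x) ≤ (P.map X) (Ici (x/2)) + P {ω | x/2 ≤ Y ω} := by
  rw [Measure.map_apply (f := fun ω => X ω + Y ω) (hX.add hY) measurableSet_Ici, Measure.map_apply hX measurableSet_Ici]
  refine le_trans (measure_mono ?_) (measure_union_le _ _)
  intro ω h
  simp only [mem_preimage, mem_Ici, mem_union, mem_setOf_eq] at *
  rcases le_total (X ω) (x/2) with h1 | h1
  · right; linarith
  · left; exact h1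

lemma lintegral_Ioc_id {t : ℝ} (ht : 0 ≤ t) :
    ∫⁻ x in Ioc (0:ℝ) t, ENNReal.ofReal x = ENNReal.ofReal (t^2/2) := by
  have hint : IntegrableOn (fun x : ℝ => x) (Ioc (0:ℝ) t) := continuous_id.integrableOn_Ioc
  rw [← ofReal_integral_eq_lintegral_ofReal hint
    ((ae_restrict_iff' measurableSet_Ioc).2 (ae_of_all _ fun x hx => hx.1.le))]
  rw [← intervalIntegral.integral_of_le ht, integral_id]
  norm_num

lemma TO_sm (Y : Ω → ℝ) (hY : Measurable Y) :
    ∫⁻ x in Ioi (0:ℝ), ENNReal.ofReal x * P {ω | x/2 ≤ Y ω}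
      ≤ 2 * ∫⁻ ω, ENNReal.ofReal ((Y ω)^2) ∂P := by
  have hset : MeasurableSet {p : ℝ × Ω | p.1 ≤ 2 * Y p.2} :=
    measurableSet_le measurable_fst ((measurable_const.mul hY).comp measurable_snd)
  have step1 : ∫⁻ x in Ioi (0:ℝ), ENNReal.ofReal x * P {ω | x/2 ≤ Y ω}
      = ∫⁻ x in Ioi (0:ℝ), ∫⁻ ω, {p : ℝ × Ω | p.1 ≤ 2 * Y p.2}.indicator
          (fun p => ENNReal.ofReal p.1) (x, ω) ∂P := by
    refine lintegral_congr fun x => ?_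
    have hs : {ω | x/2 ≤ Y ω} = {ω | x ≤ 2 * Y ω} := by ext ω; constructor <;> intro h <;> simp at * <;> linarith
    rw [hs, ← lintegral_indicator_const (measurableSet_le (g := fun ω => 2 * Y ω) measurable_const (measurable_const.mul hY))
      (ENNReal.ofReal x)]
    refine lintegral_congr fun ω => ?_
    simp [Set.indicator_apply]
  rw [step1]
  rw [show (∫⁻ x in Ioi (0:ℝ), ∫⁻ ω, {p : ℝ × Ω | p.1 ≤ 2 * Y p.2}.indicator
          (fun p => ENNReal.ofReal p.1) (x, ω) ∂P)
      = ∫⁻ ω, (∫⁻ x in Ioi (0:ℝ), {p : ℝ × Ω | p.1 ≤ 2 * Y p.2}.indicator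
          (fun p => ENNReal.ofReal p.1) (x, ω)) ∂P from by
    refine lintegral_lintegral_swap ?_
    exact (((measurable_fst.ennreal_ofReal).indicator hset).comp
      (measurable_fst.prodMk measurable_snd)).aemeasurable]
  have step2 : ∀ ω, (∫⁻ x in Ioi (0:ℝ), {p : ℝ × Ω | p.1 ≤ 2 * Y p.2}.indicator
      (fun p => ENNReal.ofReal p.1) (x, ω)) ≤ ENNReal.ofReal (2 * (Y ω)^2) := by
    intro ω
    have h1 : ∀ x : ℝ, ({p : ℝ × Ω | p.1 ≤ 2 * Y p.2}.indicator
        (fun p => ENNReal.ofReal p.1) (x, ω)) = (Iic (2 * Y ω)).indicator ENNReal.ofReal x := by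
      intro x; simp [Set.indicator_apply]
    simp_rw [h1]
    rw [lintegral_indicator measurableSet_Iic, Measure.restrict_restrict measurableSet_Iic]
    rw [Iic_inter_Ioi]
    rcases le_total (2 * Y ω) 0 with h | h
    · rw [Ioc_eq_empty (not_lt.2 h)]
      simp
    · rw [lintegral_Ioc_id h]
      apply ENNReal.ofReal_le_ofReal
      nlinarith
  calc (∫⁻ ω, (∫⁻ x in Ioi (0:ℝ), {p : ℝ × Ω | p.1 ≤ 2 * Y p.2}.indicator
          (fun p => ENNReal.ofReal p.1) (x, ω)) ∂P)
      ≤ ∫⁻ ω, ENNReal.ofReal (2 * (Y ω)^2) ∂P := lintegral_mono step2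
    _ = 2 * ∫⁻ ω, ENNReal.ofReal ((Y ω)^2) ∂P := by
        simp_rw [ENNReal.ofReal_mul (by norm_num : (0:ℝ) ≤ 2)]
        rw [lintegral_const_mul _ (hY.pow_const 2).ennreal_ofReal]
        norm_num

lemma TO_scale (g : ℝ → ℝ≥0∞) (hg : Measurable g) :
    ∫⁻ x : ℝ, g (x/2) = 2 * ∫⁻ x : ℝ, g x := by
  have h2 : (2⁻¹ : ℝ) ≠ 0 := by norm_num
  have : ∀ x : ℝ, g (x/2) = g (2⁻¹ * x) := by intro x; rw [inv_mul_eq_div]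
  simp_rw [this]
  rw [← lintegral_map hg (measurable_const_mul _), Real.map_volume_mul_left h2]
  rw [lintegral_smul_measure]
  norm_num

lemma TO_oneDir (X Y : Ω → ℝ) (hX : Measurable X) (hY : Measurable Y)
    (hY2 : Integrable (fun ω => Y ω ^ 2) P) (h : TO (P.map X)) :
    TO (P.map fun ω => X ω + Y ω) := by
  obtain ⟨κ, hκ, hfin⟩ := h
  rw [TOat] at hfin
  set μ := P.map X with hμ
  set ν := P.map (fun ω => X ω + Y ω) with hν
  set C := ∫⁻ ω, ENNReal.ofReal ((Y ω)^2) ∂P with hCdef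
  have hCfin : C ≠ ⊤ := hY2.lintegral_lt_top.ne
  set M := 7 + 9 * C with hM
  have hMpos : (0:ℝ≥0∞) < M := lt_of_lt_of_le (by norm_num : (0:ℝ≥0∞) < 7) le_self_add
  have hM0 : M ≠ 0 := hMpos.ne'
  have hMtop : M ≠ ⊤ :=
    ENNReal.add_ne_top.2 ⟨by norm_num, ENNReal.mul_ne_top (by norm_num) hCfin⟩
  have hmono' : Monotone fun u : ℝ => TOden μ u := fun _ _ hst => TOden_mono μ hst
  have hmono : Measurable fun u : ℝ => TOden μ u := hmono'.measurable
  have hanti' : Antitone fun u : ℝ => μ (Ici u) :=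
    fun _ _ hst => measure_mono (Ici_subset_Ici.2 hst)
  have hanti : Measurable fun u : ℝ => μ (Ici u) := hanti'.measurable
  set f : ℝ → ℝ≥0∞ := fun u => (ENNReal.ofReal u * μ (Ici u)) / TOden μ u with hfdef
  have hf : Measurable f := (measurable_id.ennreal_ofReal.mul hanti).div hmono
  refine ⟨2*κ, by linarith, ?_⟩
  rw [TOat]
  have hptw : ∀ x ∈ Ioi (2*κ), (ENNReal.ofReal x * ν (Ici x)) / TOden ν x
      ≤ (2*M) * (Ioi κ).indicator f (x/2) + ENNReal.ofReal x * P {ω | x/2 ≤ Y ω} := by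
    intro x hx
    rw [mem_Ioi] at hx
    have hx2 : κ < x/2 := by linarith
    have hx0 : 0 < x := by linarith
    have h1 : ν (Ici x) ≤ μ (Ici (x/2)) + P {ω | x/2 ≤ Y ω} := tail_le P X Y hX hY x
    calc (ENNReal.ofReal x * ν (Ici x)) / TOden ν x
        ≤ (ENNReal.ofReal x * (μ (Ici (x/2)) + P {ω | x/2 ≤ Y ω})) / TOden ν x := by
          gcongr
      _ = (ENNReal.ofReal x * μ (Ici (x/2))) / TOden ν x
          + (ENNReal.ofReal x * P {ω | x/2 ≤ Y ω}) / TOden ν x := by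
          rw [mul_add, ENNReal.add_div]
      _ ≤ (2*M) * (Ioi κ).indicator f (x/2) + ENNReal.ofReal x * P {ω | x/2 ≤ Y ω} := by
          refine add_le_add ?_ ?_
          · rw [indicator_of_mem (mem_Ioi.2 hx2)]
            have hden : TOden μ (x/2) ≤ M * TOden ν x := by
              refine le_trans (den_le P X Y hX hY (by linarith : (0:ℝ) ≤ x/2)) ?_
              exact mul_le_mul_right (TOden_mono ν (by linarith : x/2 ≤ x)) M
            have hx' : ENNReal.ofReal x = 2 * ENNReal.ofReal (x/2) := by
              rw [show x = 2 * (x/2) by ring, ENNReal.ofReal_mul (by norm_num : (0:ℝ) ≤ 2)]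
              norm_num
            calc (ENNReal.ofReal x * μ (Ici (x/2))) / TOden ν x
                = (M * (ENNReal.ofReal x * μ (Ici (x/2)))) / (M * TOden ν x) :=
                  (ENNReal.mul_div_mul_left _ _ hM0 hMtop).symm
              _ ≤ (M * (ENNReal.ofReal x * μ (Ici (x/2)))) / TOden μ (x/2) :=
                  ENNReal.div_le_div_left hden _
              _ = (2*M) * ((ENNReal.ofReal (x/2) * μ (Ici (x/2))) / TOden μ (x/2)) := by
                  rw [hx', show M * (2 * ENNReal.ofReal (x/2) * μ (Ici (x/2)))
                    = (2*M) * (ENNReal.ofReal (x/2) * μ (Ici (x/2))) from by ring, mul_div_assoc]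
          · refine ENNReal.div_le_of_le_mul ?_
            calc ENNReal.ofReal x * P {ω | x/2 ≤ Y ω}
                = (ENNReal.ofReal x * P {ω | x/2 ≤ Y ω}) * 1 := (mul_one _).symm
              _ ≤ (ENNReal.ofReal x * P {ω | x/2 ≤ Y ω}) * TOden ν x :=
                  mul_le_mul_right (one_le_TOden ν x) _
  have hg : Measurable fun x : ℝ => (Ioi κ).indicator f (x/2) := by
    exact (hf.indicator measurableSet_Ioi).comp (measurable_id.div_const 2)
  have hmeas2 : Measurable fun x : ℝ => (2*M) * (Ioi κ).indicator f (x/2) := hg.const_mul _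
  calc (∫⁻ x in Ioi (2*κ), (ENNReal.ofReal x * ν (Ici x)) / TOden ν x)
      ≤ ∫⁻ x in Ioi (2*κ), ((2*M) * (Ioi κ).indicator f (x/2)
          + ENNReal.ofReal x * P {ω | x/2 ≤ Y ω}) :=
        lintegral_mono_ae ((ae_restrict_iff' measurableSet_Ioi).2 (ae_of_all _ hptw))
    _ = (∫⁻ x in Ioi (2*κ), (2*M) * (Ioi κ).indicator f (x/2))
          + ∫⁻ x in Ioi (2*κ), ENNReal.ofReal x * P {ω | x/2 ≤ Y ω} :=
        lintegral_add_left hmeas2 _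
    _ ≤ (2*M) * (2 * ∫⁻ u in Ioi κ, f u) + 2 * C := by
        refine add_le_add ?_ ?_
        · rw [lintegral_const_mul _ hg]
          refine mul_le_mul_right ?_ _
          refine le_trans (setLIntegral_le_lintegral _ _) ?_
          rw [TO_scale _ (hf.indicator measurableSet_Ioi), lintegral_indicator measurableSet_Ioi]
        · refine le_trans (lintegral_mono_set (Ioi_subset_Ioi (by linarith : (0:ℝ) ≤ 2*κ))) ?_
          exact TO_sm P Y hY
    _ < ⊤ := by
        refine ENNReal.add_lt_top.2 ⟨?_, ?_⟩
        · refine ENNReal.mul_lt_top ?_ ?_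
          · exact ENNReal.mul_lt_top (by norm_num) hMtop.lt_top
          · exact ENNReal.mul_lt_top (by norm_num) hfin
        · exact ENNReal.mul_lt_top (by norm_num) hCfin.lt_top

end aux

/-- If `Y` is square integrable (no independence of `X` and `Y` assumed), the
distribution of `X` satisfies (TO) iff the distribution of `X + Y` does. -/
theorem TO_add_sq_integrable {Ω : Type*} [MeasurableSpace Ω] (P : Measure Ω)
    [IsProbabilityMeasure P] (X Y : Ω → ℝ) (hX : Measurable X) (hY : Measurable Y)
    (hY2 : Integrable (fun ω => Y ω ^ 2) P) :
    TO (P.map X) ↔ TO (P.map fun ω => X ω + Y ω) := by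
  constructor
  · exact TO_oneDir P X Y hX hY hY2
  · intro h
    have h2 : Integrable (fun ω => (-Y ω) ^ 2) P := by simpa using hY2
    have h3 := TO_oneDir P (fun ω => X ω + Y ω) (fun ω => -Y ω) (hX.add hY) hY.neg h2 h
    simpa using h3
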